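/- Let Φ' be a completely positive map on matrices over a finite-dimensional Hilbert space whose Heisenberg-picture adjoint satisfies Φ'*(I) = E where E is a rank-one positive operator. Then there exists a state ξ such that Φ'(ρ) = tr(ρE)·ξ for all ρ. -/

import Mathlib

open Matrix ComplexOrder
open scoped Kronecker

noncomputable section

/-- `n × n` complex matrices, modelling operators on an `n`-dimensional Hilbert space. -/
abbrev Mat (n : ℕ) := Matrix (Fin n) (Fin n) ℂ

/-- An effect: an operator `E` with `0 ≤ E ≤ I` in the Loewner order. -/
def IsEffect {n : ℕ} (E : Mat n) : Prop := E.PosSemidef ∧ ((1 : Mat n) - E).PosSemidef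

/-- The extension `Φ ⊗ id_k` of a map between matrix algebras, acting on block matrices. -/
def cpExt {m n : ℕ} (Φ : Mat m →ₗ[ℂ] Mat n) (k : ℕ)
    (M : Matrix (Fin m × Fin k) (Fin m × Fin k) ℂ) :
    Matrix (Fin n × Fin k) (Fin n × Fin k) ℂ :=
  Matrix.of fun p q => Φ (Matrix.of fun a b => M (a, p.2) (b, q.2)) p.1 q.1

/-- Complete positivity of a linear map between matrix algebras. -/
def IsCP {m n : ℕ} (Φ : Mat m →ₗ[ℂ] Mat n) : Prop :=
  ∀ (k : ℕ) (M : Matrix (Fin m × Fin k) (Fin m × Fin k) ℂ),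
    M.PosSemidef → (cpExt Φ k M).PosSemidef

namespace CPRankOneAux

lemma posSemidef_iff_eq_transpose_mul_self {ι : Type*} [Fintype ι] {A : Matrix ι ι ℂ} :
    A.PosSemidef → ∃ (m : ℕ) (B : Matrix (Fin m) ι ℂ), A = Bᴴ * B := by
  intro hA
  obtain ⟨m, v, hv⟩ := Matrix.posSemidef_iff_eq_sum_vecMulVec.mp hA
  refine ⟨m, Matrix.of fun i j => star (v i j), ?_⟩
  rw [hv]; ext a b
  simp [Matrix.mul_apply, Matrix.sum_apply, vecMulVec_apply, conjTranspose_apply]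

lemma conj_dotProduct_star {ι : Type*} [Fintype ι] (v x : ι → ℂ) :
    (starRingEnd ℂ) (star v ⬝ᵥ x) = star x ⬝ᵥ v := by
  simp [dotProduct, map_sum, mul_comm]

lemma psd_vecMulVec {ι : Type*} [Fintype ι] (x : ι → ℂ) :
    (vecMulVec x (star x)).PosSemidef := by
  refine PosSemidef.of_dotProduct_mulVec_nonneg ?_ ?_
  · ext i j
    simp [vecMulVec_apply, conjTranspose_apply, mul_comm]
  · intro y
    have h1 : (vecMulVec x (star x)) *ᵥ y = (star x ⬝ᵥ y) • x := by
      ext i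
      simp [mulVec, vecMulVec_apply, dotProduct, Finset.mul_sum, mul_comm, mul_left_comm]
    have h2 : star y ⬝ᵥ x = (starRingEnd ℂ) (star x ⬝ᵥ y) := (conj_dotProduct_star x y).symm
    rw [h1, dotProduct_smul, smul_eq_mul, h2, Complex.mul_conj]
    exact_mod_cast Complex.normSq_nonneg _

lemma psd_entry_zero {ι : Type*} [Fintype ι] {A : Matrix ι ι ℂ} (hA : A.PosSemidef) {j : ι}
    (h : A j j = 0) (i : ι) : A i j = 0 := by
  obtain ⟨_, B, rfl⟩ := posSemidef_iff_eq_transpose_mul_self hA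
  have hB : ∀ k, B k j = 0 := by
    have h1 : ((∑ k, Complex.normSq (B k j) : ℝ) : ℂ) = 0 := by
      rw [← h]
      simp [Matrix.mul_apply, conjTranspose_apply, Complex.normSq_eq_conj_mul_self]
    have h2 : (∑ k, Complex.normSq (B k j) : ℝ) = 0 := by exact_mod_cast h1
    intro k
    have := (Finset.sum_eq_zero_iff_of_nonneg (fun k _ => Complex.normSq_nonneg _)).mp h2
      k (Finset.mem_univ k)
    exact Complex.normSq_eq_zero.mp this
  simp [Matrix.mul_apply, fun k => hB k]

lemma psd_trace_zero {ι : Type*} [Fintype ι] {A : Matrix ι ι ℂ} (hA : A.PosSemidef)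
    (h : A.trace = 0) : A = 0 := by
  obtain ⟨_, B, rfl⟩ := posSemidef_iff_eq_transpose_mul_self hA
  have hB : ∀ k l, B k l = 0 := by
    have h1 : ((∑ l, ∑ k, Complex.normSq (B k l) : ℝ) : ℂ) = 0 := by
      rw [← h]
      simp [Matrix.trace, Matrix.mul_apply, Matrix.diag, conjTranspose_apply,
        Complex.normSq_eq_conj_mul_self]
    have h2 : (∑ l, ∑ k, Complex.normSq (B k l) : ℝ) = 0 := by exact_mod_cast h1
    intro k l
    have h3 := (Finset.sum_eq_zero_iff_of_nonneg (fun l _ =>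
      Finset.sum_nonneg fun k _ => Complex.normSq_nonneg _)).mp h2 l (Finset.mem_univ l)
    have h4 := (Finset.sum_eq_zero_iff_of_nonneg (fun k _ =>
      Complex.normSq_nonneg _)).mp h3 k (Finset.mem_univ k)
    exact Complex.normSq_eq_zero.mp h4
  have : B = 0 := by ext k l; exact hB k l
  simp [this]

lemma trace_mul_vecMulVec {ι : Type*} [Fintype ι] {ρ : Matrix ι ι ℂ} {v : ι → ℂ} :
    (ρ * vecMulVec v (star v)).trace = star v ⬝ᵥ (ρ *ᵥ v) := by
  simp only [Matrix.trace, Matrix.diag, Matrix.mul_apply, vecMulVec_apply, dotProduct,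
    mulVec, Pi.star_apply]
  refine Finset.sum_congr rfl fun i _ => ?_
  rw [Finset.mul_sum]
  refine Finset.sum_congr rfl fun j _ => ?_
  ring

lemma phi_psd {n m : ℕ} (Φ : Mat n →ₗ[ℂ] Mat m) (hΦ : IsCP Φ) {ρ : Mat n}
    (hρ : ρ.PosSemidef) : (Φ ρ).PosSemidef := by
  have hM : (Matrix.of fun (p q : Fin n × Fin 1) => ρ p.1 q.1).PosSemidef :=
    hρ.submatrix Prod.fst
  have h := hΦ 1 _ hM
  have heq : Φ ρ = (cpExt Φ 1 (Matrix.of fun (p q : Fin n × Fin 1) => ρ p.1 q.1)).submatrix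
      (fun i => (i, 0)) (fun i => (i, 0)) := by
    ext i j
    simp only [submatrix_apply, cpExt, Matrix.of_apply]
    rfl
  rw [heq]
  exact h.submatrix _

lemma twopos {n m : ℕ} (Φ : Mat n →ₗ[ℂ] Mat m) (hΦ : IsCP Φ) (a b : Fin n → ℂ)
    (hb : Φ (vecMulVec b (star b)) = 0) :
    Φ (vecMulVec a (star b)) = 0 ∧ Φ (vecMulVec b (star a)) = 0 := by
  set w : Fin n × Fin 2 → ℂ := fun p => if p.2 = 0 then a p.1 else b p.1 with hw
  have hM : (vecMulVec w (star w)).PosSemidef := psd_vecMulVec w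
  have hC := hΦ 2 _ hM
  have hblock : ∀ (p q : Fin m) (c c' : Fin 2),
      cpExt Φ 2 (vecMulVec w (star w)) (p, c) (q, c') =
        Φ (vecMulVec (fun i => w (i, c)) (star fun j => w (j, c'))) p q := by
    intro p q c c'
    simp only [cpExt, Matrix.of_apply]
    congr 1
  have hdiag : ∀ q : Fin m, cpExt Φ 2 (vecMulVec w (star w)) (q, 1) (q, 1) = 0 := by
    intro q
    rw [hblock]
    have : (fun i => w (i, (1 : Fin 2))) = b := by ext i; simp [hw]
    rw [this, hb]
    rfl
  have h01 : ∀ p q : Fin m, cpExt Φ 2 (vecMulVec w (star w)) (p, 0) (q, 1) = 0 := by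
    intro p q
    exact psd_entry_zero hC (hdiag q) (p, 0)
  have ha : (fun i => w (i, (0 : Fin 2))) = a := by ext i; simp [hw]
  have hbb : (fun j => w (j, (1 : Fin 2))) = b := by ext j; simp [hw]
  constructor
  · ext p q
    have := h01 p q
    rw [hblock, ha, hbb] at this
    simpa using this
  · ext p q
    have h10 : cpExt Φ 2 (vecMulVec w (star w)) (p, 1) (q, 0) = 0 := by
      have heq : cpExt Φ 2 (vecMulVec w (star w)) (p, 1) (q, 0) =
          (starRingEnd ℂ) (cpExt Φ 2 (vecMulVec w (star w)) (q, 0) (p, 1)) := by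
        conv_lhs => rw [← hC.1]
        rfl
      rw [heq, h01, map_zero]
    rw [hblock, ha, hbb] at h10
    simpa using h10

lemma rank_one_decomp {n : ℕ} {E : Mat n} (hE : E.PosSemidef) (hrank : E.rank = 1) :
    ∃ v : Fin n → ℂ, E = vecMulVec v (star v) := by
  have hH := hE.1
  have hcard : Fintype.card {i // hH.eigenvalues i ≠ 0} = 1 := by
    rw [← hH.rank_eq_card_non_zero_eigs, hrank]
  obtain ⟨⟨i₀, hi₀⟩, huniq⟩ := Fintype.card_eq_one_iff.mp hcard
  have hzero : ∀ j, j ≠ i₀ → hH.eigenvalues j = 0 := by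
    intro j hj
    by_contra h
    exact hj (congrArg Subtype.val (huniq ⟨j, h⟩))
  have hnn : 0 ≤ hH.eigenvalues i₀ := hE.eigenvalues_nonneg i₀
  refine ⟨fun a => (Real.sqrt (hH.eigenvalues i₀) : ℂ) *
    (hH.eigenvectorUnitary : Mat n) a i₀, ?_⟩
  have hspec := hH.spectral_theorem
  ext a b
  rw [congrFun (congrFun hspec a) b]
  rw [Unitary.conjStarAlgAut_apply]
  rw [Matrix.mul_apply]
  simp only [Matrix.mul_diagonal, Matrix.star_apply, Function.comp_apply, RCLike.star_def,
    vecMulVec_apply, Pi.star_apply, _root_.map_mul]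
  rw [Finset.sum_eq_single i₀]
  · have h2 : ((Real.sqrt (hH.eigenvalues i₀) : ℝ) : ℂ) * ((Real.sqrt (hH.eigenvalues i₀) : ℝ) : ℂ)
        = ((hH.eigenvalues i₀ : ℝ) : ℂ) := by
      rw [← Complex.ofReal_mul, Real.mul_self_sqrt hnn]
    rw [Complex.conj_ofReal]
    rw [show (RCLike.ofReal (hH.eigenvalues i₀) : ℂ) = ((hH.eigenvalues i₀ : ℝ) : ℂ) from rfl]
    linear_combination (-((hH.eigenvectorUnitary : Mat n) a i₀ *
      (starRingEnd ℂ) ((hH.eigenvectorUnitary : Mat n) b i₀))) * h2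
  · intro j _ hj
    rw [hzero j hj]
    simp
  · intro h
    exact absurd (Finset.mem_univ i₀) h

end CPRankOneAux

open CPRankOneAux

/-- A completely positive map whose Heisenberg adjoint sends `I` to a rank-one positive
operator `E` is of the form `ρ ↦ tr(ρE)·ξ` for a fixed state `ξ`. -/
theorem cp_map_rank_one_adjoint_unit {n m : ℕ}
    (Φ : Mat n →ₗ[ℂ] Mat m) (hΦ : IsCP Φ)
    (E : Mat n) (hEpos : E.PosSemidef) (hrank : E.rank = 1)
    (htr : ∀ ρ : Mat n, (Φ ρ).trace = (ρ * E).trace) :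
    ∃ ξ : Mat m, ξ.PosSemidef ∧ ξ.trace = 1 ∧
      ∀ ρ : Mat n, Φ ρ = (ρ * E).trace • ξ := by
  obtain ⟨v, hEv⟩ := rank_one_decomp hEpos hrank
  set c : ℂ := star v ⬝ᵥ v with hcdef
  set r : ℝ := ∑ i, Complex.normSq (v i) with hrdef
  have hcr : c = (r : ℂ) := by
    simp [hcdef, hrdef, dotProduct, Complex.normSq_eq_conj_mul_self]
  have hvne : v ≠ 0 := by
    intro h
    rw [h] at hEv
    have : E = 0 := by
      rw [hEv]; ext i j; simp [vecMulVec_apply]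
    rw [this] at hrank
    simp [Matrix.rank_zero] at hrank
  have hrpos : 0 < r := by
    rcases lt_or_eq_of_le (Finset.sum_nonneg fun i _ => Complex.normSq_nonneg (v i)) with h | h
    · exact h
    · exfalso
      apply hvne
      ext i
      have := (Finset.sum_eq_zero_iff_of_nonneg (fun i _ => Complex.normSq_nonneg (v i))).mp
        h.symm i (Finset.mem_univ i)
      exact Complex.normSq_eq_zero.mp this
  have hcne : c ≠ 0 := by
    rw [hcr]
    exact_mod_cast hrpos.ne'
  -- kernel lemma
  have hker : ∀ x : Fin n → ℂ, star v ⬝ᵥ x = 0 → Φ (vecMulVec x (star x)) = 0 := by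
    intro x hx
    apply psd_trace_zero (phi_psd Φ hΦ (psd_vecMulVec x))
    rw [htr, hEv, trace_mul_vecMulVec]
    have hmv : (vecMulVec x (star x)) *ᵥ v = (star x ⬝ᵥ v) • x := by
      ext i
      simp [mulVec, vecMulVec_apply, dotProduct, Finset.mul_sum, mul_comm, mul_left_comm]
    rw [hmv, dotProduct_smul, smul_eq_mul, hx, mul_zero]
  have hperpL : ∀ x y : Fin n → ℂ, star v ⬝ᵥ x = 0 → Φ (vecMulVec x (star y)) = 0 :=
    fun x y hx => (twopos Φ hΦ y x (hker x hx)).2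
  have hperpR : ∀ x y : Fin n → ℂ, star v ⬝ᵥ x = 0 → Φ (vecMulVec y (star x)) = 0 :=
    fun x y hx => (twopos Φ hΦ y x (hker x hx)).1
  set Ξ : Mat m := Φ (vecMulVec v (star v)) with hΞ
  -- main step on rank-one matrices
  have hstep : ∀ a b : Fin n → ℂ, Φ (vecMulVec a (star b)) =
      ((star v ⬝ᵥ a) * (star b ⬝ᵥ v) * (c ^ 2)⁻¹) • Ξ := by
    intro a b
    set α : ℂ := star v ⬝ᵥ a with hα
    set β : ℂ := star v ⬝ᵥ b with hβ
    set a' : Fin n → ℂ := a - (α / c) • v with ha'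
    set b' : Fin n → ℂ := b - (β / c) • v with hb'
    have hpa : star v ⬝ᵥ a' = 0 := by
      simp only [ha', dotProduct_sub, dotProduct_smul, smul_eq_mul, ← hα, ← hcdef]
      field_simp
      ring
    have hpb : star v ⬝ᵥ b' = 0 := by
      simp only [hb', dotProduct_sub, dotProduct_smul, smul_eq_mul, ← hβ, ← hcdef]
      field_simp
      ring
    have hdecomp : vecMulVec a (star b) =
        vecMulVec a' (star b) + (α / c) • vecMulVec v (star b') +
          ((α / c) * (starRingEnd ℂ) (β / c)) • vecMulVec v (star v) := by
      ext i j
      simp only [Matrix.add_apply, Matrix.smul_apply, vecMulVec_apply, Pi.star_apply,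
        ha', hb', Pi.sub_apply, Pi.smul_apply, smul_eq_mul, RCLike.star_def, _root_.map_sub,
        _root_.map_mul]
      ring
    rw [hdecomp, map_add, map_add, LinearMap.map_smul, LinearMap.map_smul]
    rw [hperpL a' b hpa, hperpR b' v hpb]
    simp only [smul_zero, zero_add, ← hΞ]
    congr 1
    have hconjβ : (starRingEnd ℂ) β = star b ⬝ᵥ v := conj_dotProduct_star v b
    have hconjc : (starRingEnd ℂ) c = c := by
      rw [hcr, Complex.conj_ofReal]
    rw [map_div₀, hconjβ, hconjc, div_mul_div_comm, ← sq, div_eq_mul_inv]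
  refine ⟨(c ^ 2)⁻¹ • Ξ, ?_, ?_, ?_⟩
  · -- PSD
    have hΞpsd : Ξ.PosSemidef := phi_psd Φ hΦ (psd_vecMulVec v)
    have hcoe : ((c ^ 2)⁻¹ : ℂ) = (((r ^ 2)⁻¹ : ℝ) : ℂ) := by
      rw [hcr]; push_cast; ring
    refine PosSemidef.of_dotProduct_mulVec_nonneg ?_ ?_
    · ext i j
      simp only [conjTranspose_apply, Matrix.smul_apply, smul_eq_mul, star_mul']
      rw [← conjTranspose_apply _ j i, hΞpsd.1]
      congr 1
      rw [hcoe, RCLike.star_def, Complex.conj_ofReal]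
    · intro x
      have := hΞpsd.dotProduct_mulVec_nonneg x
      rw [hcoe]
      have hsm : ((((r ^ 2)⁻¹ : ℝ) : ℂ) • Ξ) *ᵥ x = (((r ^ 2)⁻¹ : ℝ) : ℂ) • (Ξ *ᵥ x) := by
        rw [smul_mulVec]
      rw [hsm, dotProduct_smul, smul_eq_mul]
      have h1 : (0 : ℂ) ≤ (((r ^ 2)⁻¹ : ℝ) : ℂ) := by
        rw [Complex.zero_le_real]
        positivity
      exact mul_nonneg h1 this
  · -- trace 1
    have htrΞ : Ξ.trace = c * c := by
      rw [hΞ, htr, hEv, trace_mul_vecMulVec]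
      have hmv : (vecMulVec v (star v)) *ᵥ v = (star v ⬝ᵥ v) • v := by
        ext i
        simp [mulVec, vecMulVec_apply, dotProduct, Finset.mul_sum, mul_comm, mul_left_comm]
      rw [hmv, dotProduct_smul, smul_eq_mul, ← hcdef]
    rw [Matrix.trace_smul, htrΞ, smul_eq_mul]
    field_simp
  · -- the formula
    intro ρ
    have hdecompρ : ρ = ∑ j, vecMulVec (fun i => ρ i j) (star (Pi.single j (1 : ℂ))) := by
      ext i k
      simp only [Finset.sum_apply, Matrix.sum_apply, vecMulVec_apply, Pi.star_apply,
        Pi.single_apply, RCLike.star_def]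
      rw [Finset.sum_eq_single k]
      · simp
      · intro j _ hj
        simp [Ne.symm hj]
      · intro h
        exact absurd (Finset.mem_univ k) h
    have hsingle : ∀ j : Fin n, star (Pi.single j (1 : ℂ)) ⬝ᵥ v = v j := by
      intro j
      simp [dotProduct, Pi.single_apply]
    conv_lhs => rw [hdecompρ]
    rw [map_sum]
    rw [Finset.sum_congr rfl fun j _ => hstep (fun i => ρ i j) (Pi.single j (1 : ℂ))]
    rw [← Finset.sum_smul]
    rw [smul_smul]
    congr 1
    rw [hEv, trace_mul_vecMulVec]
    rw [Finset.sum_congr rfl fun j _ => by rw [hsingle j]]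
    rw [← Finset.sum_mul]
    congr 1
    simp only [dotProduct, mulVec, Pi.star_apply, Finset.sum_mul, Finset.mul_sum]
    rw [Finset.sum_comm]
    exact Finset.sum_congr rfl fun x _ => Finset.sum_congr rfl fun y _ => by ring
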